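/- Let G be a finite simple graph and f_G the CNF formula with one variable x_v per vertex v, consisting of the clause (x_v ∨ x_w) for each edge {v,w} and the unit clause (x_v) for each vertex v. Then for any two graphs G and H, the formulas f_G and f_H are isomorphic (there are bijections of literals and clauses preserving negation and clause membership) if and only if G and H are isomorphic graphs. -/
import Mathlib


/-- The CNF formula `f_G` of a graph `G`, with one positive variable per vertex:
the clause `(x_v ∨ x_w)` for each edge `{v, w}` and the unit clause `(x_v)` for
each vertex `v`. Literals are pairs `(variable, polarity)` and clauses are finsets
of literals. -/
def fG {V : Type*} [Fintype V] [DecidableEq V] (G : SimpleGraph V)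
    [DecidableRel G.Adj] : Finset (Finset (V × Bool)) :=
  ((Finset.univ.filter fun p : V × V => G.Adj p.1 p.2).image
      fun p => ({(p.1, true), (p.2, true)} : Finset (V × Bool))) ∪
    Finset.univ.image fun v => ({(v, true)} : Finset (V × Bool))

lemma mem_fG {V : Type*} [Fintype V] [DecidableEq V] (G : SimpleGraph V)
    [DecidableRel G.Adj] (c : Finset (V × Bool)) :
    c ∈ fG G ↔ (∃ v w, G.Adj v w ∧ c = {(v, true), (w, true)}) ∨ ∃ v, c = {(v, true)} := by
  simp only [fG, Finset.mem_union, Finset.mem_image, Finset.mem_filter, Finset.mem_univ,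
    true_and]
  constructor
  · rintro (⟨⟨v, w⟩, hadj, rfl⟩ | ⟨v, rfl⟩)
    · exact Or.inl ⟨v, w, hadj, rfl⟩
    · exact Or.inr ⟨v, rfl⟩
  · rintro (⟨v, w, hadj, rfl⟩ | ⟨v, rfl⟩)
    · exact Or.inl ⟨(v, w), hadj, rfl⟩
    · exact Or.inr ⟨v, rfl⟩

/-- `f_G` and `f_H` are isomorphic as CNF formulas — there is a bijection of
literals commuting with negation that induces a bijection of clauses — iff the
graphs `G` and `H` are isomorphic. -/
theorem fG_iso_iff_graph_iso {V W : Type*} [Fintype V] [DecidableEq V]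
    [Fintype W] [DecidableEq W] (G : SimpleGraph V) [DecidableRel G.Adj]
    (H : SimpleGraph W) [DecidableRel H.Adj] :
    (∃ σL : (V × Bool) ≃ (W × Bool),
        (∀ l : V × Bool, σL (l.1, !l.2) = ((σL l).1, !(σL l).2)) ∧
        (fG G).image (fun c => c.image σL) = fG H) ↔
      Nonempty (G ≃g H) := by
  constructor
  · rintro ⟨σL, -, himg⟩
    -- every clause of the image is in fG H
    have hto : ∀ c ∈ fG G, c.image σL ∈ fG H := by
      intro c hc
      rw [← himg]
      exact Finset.mem_image_of_mem _ hc
    -- σL sends positive literals to positive literals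
    have hpos : ∀ v : V, ((σL (v, true)).2 = true) := by
      intro v
      have h1 : ({(v, true)} : Finset (V × Bool)) ∈ fG G :=
        (mem_fG G _).2 (Or.inr ⟨v, rfl⟩)
      have h2 := hto _ h1
      rw [Finset.image_singleton, mem_fG] at h2
      rcases h2 with ⟨a, b, hab, h⟩ | ⟨w, h⟩
      · exfalso
        have ha : (a, true) ∈ ({σL (v, true)} : Finset (W × Bool)) := by
          rw [h]; simp
        have hb : (b, true) ∈ ({σL (v, true)} : Finset (W × Bool)) := by
          rw [h]; simp
        rw [Finset.mem_singleton] at ha hb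
        apply hab.ne
        have := ha.trans hb.symm
        exact (Prod.mk.injEq _ _ _ _ ▸ this).1
      · rw [Finset.singleton_inj] at h
        rw [h]
    set φ : V → W := fun v => (σL (v, true)).1 with hφdef
    have hφ : ∀ v : V, σL (v, true) = (φ v, true) := by
      intro v
      have := hpos v
      ext <;> simp [hφdef, this]
    have hφinj : Function.Injective φ := by
      intro v v' h
      have : σL (v, true) = σL (v', true) := by rw [hφ, hφ, h]
      exact congrArg Prod.fst (σL.injective this)
    have hcard : Fintype.card V = Fintype.card W := by
      have := Fintype.card_congr σL
      simp [Fintype.card_prod] at this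
      omega
    have hφbij : Function.Bijective φ :=
      (Fintype.bijective_iff_injective_and_card φ).2 ⟨hφinj, hcard⟩
    let e := Equiv.ofBijective φ hφbij
    refine ⟨⟨e, ?_⟩⟩
    intro v w
    show H.Adj (φ v) (φ w) ↔ G.Adj v w
    constructor
    · -- backward: from adjacency in H
      intro hadj
      have hmem : ({(φ v, true), (φ w, true)} : Finset (W × Bool)) ∈ fG H :=
        (mem_fG H _).2 (Or.inl ⟨φ v, φ w, hadj, rfl⟩)
      rw [← himg, Finset.mem_image] at hmem
      obtain ⟨c, hc, hceq⟩ := hmem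
      rcases (mem_fG G c).1 hc with ⟨a, b, hab, rfl⟩ | ⟨u, rfl⟩
      · -- c is an edge clause
        have him : ({(a, true), (b, true)} : Finset (V × Bool)).image σL
            = {(φ a, true), (φ b, true)} := by
          rw [Finset.image_insert, Finset.image_singleton, hφ, hφ]
        rw [him] at hceq
        have ha : (φ a, true) ∈ ({(φ v, true), (φ w, true)} : Finset (W × Bool)) := by
          rw [← hceq]; simp
        have hb : (φ b, true) ∈ ({(φ v, true), (φ w, true)} : Finset (W × Bool)) := by
          rw [← hceq]; simp
        simp only [Finset.mem_insert, Finset.mem_singleton, Prod.mk.injEq, and_true] at ha hb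
        rcases ha with ha | ha <;> rcases hb with hb | hb
        · exact absurd (hφinj (ha.trans hb.symm)) hab.ne
        · rw [hφinj ha, hφinj hb] at hab; exact hab
        · rw [hφinj ha, hφinj hb] at hab; exact hab.symm
        · exact absurd (hφinj (ha.trans hb.symm)) hab.ne
      · -- c a unit clause: impossible
        exfalso
        rw [Finset.image_singleton, hφ] at hceq
        have h1 : (φ v, true) ∈ ({(φ u, true)} : Finset (W × Bool)) := by
          rw [hceq]; simp
        have h2 : (φ w, true) ∈ ({(φ u, true)} : Finset (W × Bool)) := by
          rw [hceq]; simp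
        simp only [Finset.mem_singleton, Prod.mk.injEq, and_true] at h1 h2
        exact hadj.ne (h1.trans h2.symm)
    · -- forward: from adjacency in G
      intro hadj
      have hmem : ({(v, true), (w, true)} : Finset (V × Bool)) ∈ fG G :=
        (mem_fG G _).2 (Or.inl ⟨v, w, hadj, rfl⟩)
      have h2 := hto _ hmem
      have him : ({(v, true), (w, true)} : Finset (V × Bool)).image σL
          = {(φ v, true), (φ w, true)} := by
        rw [Finset.image_insert, Finset.image_singleton, hφ, hφ]
      rw [him, mem_fG] at h2
      rcases h2 with ⟨a, b, hab, h⟩ | ⟨u, h⟩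
      · have ha : (a, true) ∈ ({(φ v, true), (φ w, true)} : Finset (W × Bool)) := by
          rw [h]; simp
        have hb : (b, true) ∈ ({(φ v, true), (φ w, true)} : Finset (W × Bool)) := by
          rw [h]; simp
        simp only [Finset.mem_insert, Finset.mem_singleton, Prod.mk.injEq, and_true] at ha hb
        rcases ha with ha | ha <;> rcases hb with hb | hb
        · exact absurd (hb.trans ha.symm).symm hab.ne
        · rw [← ha, ← hb]; exact hab
        · rw [← ha, ← hb]; exact hab.symm
        · exact absurd (hb.trans ha.symm).symm hab.ne
      · exfalso
        have h1 : (φ v, true) ∈ ({(u, true)} : Finset (W × Bool)) := by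
          rw [← h]; simp
        have h2' : (φ w, true) ∈ ({(u, true)} : Finset (W × Bool)) := by
          rw [← h]; simp
        simp only [Finset.mem_singleton, Prod.mk.injEq, and_true] at h1 h2'
        exact hadj.ne (hφinj (h1.trans h2'.symm))
  · rintro ⟨e⟩
    refine ⟨Equiv.prodCongr e.toEquiv (Equiv.refl Bool), fun l => rfl, ?_⟩
    ext c
    simp only [Finset.mem_image]
    constructor
    · rintro ⟨d, hd, rfl⟩
      rcases (mem_fG G d).1 hd with ⟨v, w, hadj, rfl⟩ | ⟨v, rfl⟩
      · rw [Finset.image_insert, Finset.image_singleton]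
        exact (mem_fG H _).2 (Or.inl ⟨e v, e w, (e.map_adj_iff).2 hadj, rfl⟩)
      · rw [Finset.image_singleton]
        exact (mem_fG H _).2 (Or.inr ⟨e v, rfl⟩)
    · intro hc
      rcases (mem_fG H c).1 hc with ⟨a, b, hadj, rfl⟩ | ⟨a, rfl⟩
      · refine ⟨{(e.symm a, true), (e.symm b, true)}, (mem_fG G _).2 (Or.inl
          ⟨e.symm a, e.symm b, ?_, rfl⟩), ?_⟩
        · rw [← e.map_adj_iff]; simpa using hadj
        · rw [Finset.image_insert, Finset.image_singleton]
          simp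
      · exact ⟨{(e.symm a, true)}, (mem_fG G _).2 (Or.inr ⟨e.symm a, rfl⟩), by
          rw [Finset.image_singleton]; simp⟩
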